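/- Suppose there are constants θ and κ with 1 < θ < (log 3)/(2 log(3/2)) such that every triple of coprime positive integers a + b = c satisfies c < κ·rad(abc)^θ. Set k₀ = ⌊(2θ log 6 + log κ)/(log 3 − 2θ log(3/2))⌋. Then for every integer k ≥ k₀ (in fact k > k₀), writing 3^k = 2^k·q + r with 0 < r < 2^k, one has r ≤ 2^k − q − 3. -/

import Mathlib

/-- The radical (squarefree kernel) of a natural number. -/
def rad (n : ℕ) : ℕ := ∏ p ∈ n.primeFactors, p

set_option maxHeartbeats 2000000 in
theorem sinnou_david (θ κ : ℝ) (hκ : 0 < κ) (hθ1 : 1 < θ)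
    (hθ2 : θ < Real.log 3 / (2 * Real.log (3 / 2)))
    (habc : ∀ a b c : ℕ, 0 < a → 0 < b → 0 < c → Nat.Coprime a b → a + b = c →
      (c : ℝ) < κ * (rad (a * b * c) : ℝ) ^ θ) :
    ∀ k : ℕ,
      (⌊(2 * θ * Real.log 6 + Real.log κ) / (Real.log 3 - 2 * θ * Real.log (3 / 2))⌋ : ℝ)
        ≤ (k : ℝ) →
      ((3 ^ k % 2 ^ k : ℕ) : ℤ) ≤ (2 : ℤ) ^ k - (3 ^ k / 2 ^ k : ℕ) - 3 := by
  intro k hk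
  set l2 := Real.log 2 with hl2def
  set l3 := Real.log 3 with hl3def
  set lκ := Real.log κ with hlκdef
  have hl2 : 0 < l2 := Real.log_pos one_lt_two
  have hl3 : 0 < l3 := Real.log_pos (by norm_num)
  have hl23 : l2 < l3 := Real.log_lt_log two_pos (by norm_num)
  have e32 : Real.log (3/2) = l3 - l2 := Real.log_div (by norm_num) (by norm_num)
  have e6 : Real.log 6 = l2 + l3 := by
    rw [show (6:ℝ) = 2*3 by norm_num, Real.log_mul (by norm_num) (by norm_num)]
  have hα : 0 < l3 - 2*θ*Real.log (3/2) := by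
    have hpos : (0:ℝ) < 2*Real.log (3/2) := by rw [e32]; linarith
    have := (lt_div_iff₀ hpos).mp hθ2
    linarith
  -- lower bound for log κ from the triple 1 + 1 = 2
  have hκ' : (1-θ)*l2 < lκ := by
    have h2 := habc 1 1 2 one_pos one_pos two_pos (Nat.coprime_one_left 1) rfl
    have hr2 : rad (1*1*2) = 2 := by norm_num [rad, Nat.Prime.primeFactors Nat.prime_two]
    rw [hr2] at h2
    have h2θ : (0:ℝ) < (2:ℝ)^θ := Real.rpow_pos_of_pos two_pos θ
    have hκgt : 2 / (2:ℝ)^θ < κ := by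
      rw [div_lt_iff₀ h2θ]
      exact_mod_cast h2
    have hlg := Real.log_lt_log (by positivity) hκgt
    rw [Real.log_div (by norm_num) (ne_of_gt h2θ), Real.log_rpow two_pos] at hlg
    rw [hlκdef, hl2def]
    linarith
  set K := (2*θ*Real.log 6 + lκ) / (l3 - 2*θ*Real.log (3/2)) with hKdef
  -- k ≥ 2
  have hk2 : 2 ≤ k := by
    have hK2 : (2:ℝ) ≤ K := by
      rw [hKdef, le_div_iff₀ hα, e32, e6]
      nlinarith [mul_pos (sub_pos.mpr hθ1) hl3, mul_pos (sub_pos.mpr hθ1) hl2,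
        mul_pos (sub_pos.mpr hθ1) (sub_pos.mpr hl23)]
    have h2f : (2:ℤ) ≤ ⌊K⌋ := Int.le_floor.mpr (by exact_mod_cast hK2)
    have : ((2:ℤ):ℝ) ≤ (⌊K⌋:ℝ) := by exact_mod_cast h2f
    have hkk : (2:ℝ) ≤ (k:ℝ) := by push_cast at this ⊢; linarith [hk]
    exact_mod_cast hkk
  by_contra hcon
  push_neg at hcon
  set q := 3^k / 2^k with hqdef
  set r := 3^k % 2^k with hrdef
  have h2pos : 0 < 2^k := Nat.pow_pos (by norm_num)
  have hqr : 2^k * q + r = 3^k := Nat.div_add_mod _ _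
  have hrlt : r < 2^k := Nat.mod_lt _ h2pos
  have hle : 2^k ≤ r + q + 2 := by
    have h1 : ((2:ℤ))^k < (r:ℤ) + (q:ℤ) + 3 := by linarith
    have h2 : ((2^k : ℕ):ℤ) < ((r + q + 3 : ℕ):ℤ) := by push_cast; linarith
    omega
  set N := 2^k - r with hNdef
  have hNpos : 0 < N := by omega
  have hNle : N ≤ q + 2 := by omega
  have hN3 : 3^k + N = 2^k * (q+1) := by
    calc 3^k + N = (2^k*q + r) + (2^k - r) := by rw [hqr]
    _ = 2^k*q + (r + (2^k - r)) := by omega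
    _ = 2^k*q + 2^k := by rw [Nat.add_sub_cancel' (le_of_lt hrlt)]
    _ = 2^k*(q+1) := by ring
  have hp3 : Nat.Prime 3 := by norm_num
  set ν := (q+1).factorization 3 with hνdef
  have hdvdν : 3^ν ∣ q + 1 := Nat.ordProj_dvd _ _
  have hnotdvd : ¬ 3^(ν+1) ∣ q + 1 := Nat.pow_succ_factorization_not_dvd q.succ_ne_zero hp3
  have hq2k : q + 1 ≤ 2^k := by
    have h34 : 3^k < 2^k * 2^k := by
      calc 3^k < 4^k := Nat.pow_lt_pow_left (by norm_num) (by omega)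
      _ = 2^k * 2^k := by rw [← Nat.mul_pow]
    have hqm : q * 2^k ≤ 3^k := Nat.div_mul_le_self _ _
    have : q * 2^k < 2^k * 2^k := lt_of_le_of_lt hqm h34
    have := Nat.lt_of_mul_lt_mul_right this
    omega
  have hνk : ν < k := by
    have h1 : 3^ν ≤ q+1 := Nat.le_of_dvd q.succ_pos hdvdν
    have h2 : (2:ℕ)^k < 3^k := Nat.pow_lt_pow_left (by norm_num) (by omega)
    have h3 : (3:ℕ)^ν < 3^k := by omega
    exact (Nat.pow_lt_pow_iff_right (by norm_num)).mp h3
  set m := (q+1)/3^ν with hmdef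
  have hm : 3^ν * m = q + 1 := Nat.mul_div_cancel' hdvdν
  have h3νpos : 0 < (3:ℕ)^ν := Nat.pow_pos (by norm_num)
  have hmpos : 0 < m := by
    rcases Nat.eq_zero_or_pos m with h|h
    · rw [h, mul_zero] at hm; exact absurd hm.symm q.succ_ne_zero
    · exact h
  have hνN : 3^ν ∣ N := by
    have h1 : 3^ν ∣ 2^k * (q+1) := Dvd.dvd.mul_left hdvdν _
    have h2 : (3:ℕ)^ν ∣ 3^k := pow_dvd_pow 3 (le_of_lt hνk)
    have hNe : N = 2^k*(q+1) - 3^k := by omega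
    rw [hNe]; exact Nat.dvd_sub h1 h2
  set b := N / 3^ν with hbdef
  have hb : 3^ν * b = N := Nat.mul_div_cancel' hνN
  have hbpos : 0 < b := by
    rcases Nat.eq_zero_or_pos b with h|h
    · rw [h, mul_zero] at hb; omega
    · exact h
  set a := 3^(k-ν) with hadef
  set c := 2^k * m with hcdef
  have hab : a + b = c := by
    apply Nat.eq_of_mul_eq_mul_left h3νpos
    calc 3^ν * (a + b) = 3^ν * 3^(k-ν) + 3^ν*b := by rw [hadef]; ring
    _ = 3^k + N := by rw [hb, ← pow_add]; congr 2; omega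
    _ = 2^k*(q+1) := hN3
    _ = 2^k*(3^ν*m) := by rw [hm]
    _ = 3^ν*(2^k*m) := by ring
  have hcop : Nat.Coprime a b := by
    apply Nat.Coprime.pow_left
    rw [Nat.Prime.coprime_iff_not_dvd hp3]
    intro h3b
    apply hnotdvd
    have h1 : 3^(ν+1) ∣ N := by
      obtain ⟨t, ht⟩ := h3b
      exact ⟨t, by rw [← hb, ht, pow_succ]; ring⟩
    have h2 : (3:ℕ)^(ν+1) ∣ 3^k + N :=
      Dvd.dvd.add (pow_dvd_pow 3 (by omega)) h1
    rw [hN3] at h2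
    have hcop32 : Nat.Coprime 3 2 := by decide
    have hcop2 : Nat.Coprime (3^(ν+1)) (2^k) := Nat.Coprime.pow (ν+1) k hcop32
    exact hcop2.dvd_of_dvd_mul_left h2
  have hapos : 0 < a := Nat.pow_pos (by norm_num)
  have hcpos : 0 < c := Nat.mul_pos h2pos hmpos
  have hmain := habc a b c hapos hbpos hcpos hcop hab
  -- radical bound
  have hraddvd : rad (a*b*c) ∣ 6*(b*m) := by
    apply Finset.prod_primes_dvd _ (fun p hp => (Nat.prime_of_mem_primeFactors hp).prime)
    intro p hp
    have hpp := Nat.prime_of_mem_primeFactors hp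
    have hpd := Nat.dvd_of_mem_primeFactors hp
    rcases (Nat.Prime.dvd_mul hpp).mp hpd with h | h
    · rcases (Nat.Prime.dvd_mul hpp).mp h with h' | h'
      · have hp3' : p = 3 := by
          have := Nat.Prime.dvd_of_dvd_pow hpp (hadef ▸ h')
          exact (Nat.prime_dvd_prime_iff_eq hpp hp3).mp this
        rw [hp3']
        exact Dvd.dvd.mul_right (by norm_num) _
      · exact Dvd.dvd.mul_left (Dvd.dvd.mul_right h' m) 6
    · rcases (Nat.Prime.dvd_mul hpp).mp (hcdef ▸ h) with h' | h'
      · have hp2' : p = 2 := by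
          have := Nat.Prime.dvd_of_dvd_pow hpp h'
          exact (Nat.prime_dvd_prime_iff_eq hpp Nat.prime_two).mp this
        rw [hp2']
        exact Dvd.dvd.mul_right (by norm_num) _
      · exact Dvd.dvd.mul_left (Dvd.dvd.mul_left h' b) 6
  have hradle : rad (a*b*c) ≤ 6*(b*m) :=
    Nat.le_of_dvd (by positivity) hraddvd
  have hθpos : (0:ℝ) < θ := by linarith
  -- pass to reals
  have hmain2 : (a:ℝ) < κ * ((6*(b*m) : ℕ):ℝ)^θ := by
    have h1 : (a:ℝ) < (c:ℝ) := by
      have : a < c := hab ▸ Nat.lt_add_of_pos_right hbpos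
      exact_mod_cast this
    have h2 : ((rad (a*b*c)):ℝ)^θ ≤ ((6*(b*m) : ℕ):ℝ)^θ :=
      Real.rpow_le_rpow (by positivity) (by exact_mod_cast hradle) (le_of_lt hθpos)
    calc (a:ℝ) < (c:ℝ) := h1
    _ < κ * ((rad (a*b*c)):ℝ)^θ := hmain
    _ ≤ κ * ((6*(b*m) : ℕ):ℝ)^θ := by
        have := hκ.le; gcongr
  set s := (3:ℝ)^ν with hsdef
  set Y := 6*((q:ℝ)+1)*((q:ℝ)+2) with hYdef
  have hspos : (0:ℝ) < s := by positivity
  have hs1 : (1:ℝ) ≤ s := by rw [hsdef]; exact one_le_pow₀ (by norm_num)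
  have hYpos : (0:ℝ) < Y := by positivity
  have hbm : ((6*(b*m) : ℕ):ℝ) ≤ Y / s^2 := by
    have hbs : (b:ℝ) * s ≤ (q:ℝ) + 2 := by
      have : (3^ν * b : ℕ) ≤ q + 2 := by rw [hb]; omega
      have h' : ((3:ℝ)^ν * b) ≤ (q:ℝ) + 2 := by exact_mod_cast this
      linarith [h']
    have hms : (m:ℝ) * s = (q:ℝ) + 1 := by
      have h' : ((3:ℝ)^ν * m) = (q:ℝ) + 1 := by exact_mod_cast hm
      linarith [h']
    rw [le_div_iff₀ (by positivity)]
    have hq0 : (0:ℝ) ≤ (q:ℝ) := Nat.cast_nonneg q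
    have key : 6*((b:ℝ)*(m:ℝ))*s^2 ≤ Y := by
      have e : 6*((b:ℝ)*(m:ℝ))*s^2 = 6*((b:ℝ)*s)*((m:ℝ)*s) := by ring
      rw [e, hms, hYdef]
      nlinarith [hbs]
    push_cast
    linarith [key]
  have h3k : (3:ℝ)^k < κ * Y^θ := by
    have h1 : κ * ((6*(b*m) : ℕ):ℝ)^θ ≤ κ * (Y/s^2)^θ := by
      have h1' : ((6*(b*m) : ℕ):ℝ)^θ ≤ (Y/s^2)^θ :=
        Real.rpow_le_rpow (by positivity) hbm (le_of_lt hθpos)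
      have := hκ.le; gcongr
    have ha' : (a:ℝ) = (3:ℝ)^(k-ν) := by rw [hadef]; push_cast; ring
    have h2 : (3:ℝ)^(k-ν) < κ * (Y/s^2)^θ := by rw [← ha']; linarith [hmain2]
    have h3 : (3:ℝ)^k = (3:ℝ)^(k-ν) * s := by
      rw [hsdef, ← pow_add]; congr 1; omega
    have hdiv : (Y/s^2)^θ = Y^θ / (s^2)^θ :=
      Real.div_rpow (le_of_lt hYpos) (sq_nonneg s) θ
    have hss : s ≤ (s^2)^θ := by
      have h4 : (s^2:ℝ)^(1:ℝ) ≤ (s^2)^θ :=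
        Real.rpow_le_rpow_of_exponent_le (by nlinarith) (le_of_lt hθ1)
      rw [Real.rpow_one] at h4
      nlinarith
    have h5 : κ * (Y/s^2)^θ * s ≤ κ * Y^θ := by
      rw [hdiv]
      have hYθ : (0:ℝ) < Y^θ := Real.rpow_pos_of_pos hYpos θ
      have hs2θ : (0:ℝ) < (s^2)^θ := Real.rpow_pos_of_pos (by positivity) θ
      have h6 : Y^θ/(s^2)^θ * s ≤ Y^θ := by
        rw [div_mul_eq_mul_div, div_le_iff₀ hs2θ]
        nlinarith
      calc κ * (Y^θ/(s^2)^θ) * s = κ * (Y^θ/(s^2)^θ * s) := by ring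
      _ ≤ κ * Y^θ := by have := hκ.le; gcongr
    calc (3:ℝ)^k = (3:ℝ)^(k-ν) * s := h3
    _ < (κ * (Y/s^2)^θ) * s := by
        apply mul_lt_mul_of_pos_right h2 hspos
    _ ≤ κ * Y^θ := h5
  -- bound Y by 27 * t^2
  set t := ((3:ℝ)/2)^k with htdef
  have htpos : (0:ℝ) < t := by positivity
  have hqt : (q:ℝ) ≤ t := by
    have h1 : (q * 2^k : ℕ) ≤ 3^k := Nat.div_mul_le_self _ _
    have h2 : (q:ℝ) * (2:ℝ)^k ≤ (3:ℝ)^k := by exact_mod_cast h1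
    rw [htdef, div_pow, le_div_iff₀ (by positivity)]
    linarith
  have ht2 : (2:ℝ) ≤ t := by
    have h1 : ((3:ℝ)/2)^2 ≤ ((3:ℝ)/2)^k := pow_le_pow_right₀ (by norm_num) hk2
    rw [htdef]; nlinarith
  have hY27 : Y ≤ 27 * t^2 := by
    have hq0 : (0:ℝ) ≤ (q:ℝ) := Nat.cast_nonneg q
    rw [hYdef]; nlinarith
  have h3k' : (3:ℝ)^k < κ * (27*t^2)^θ := by
    calc (3:ℝ)^k < κ * Y^θ := h3k
    _ ≤ κ * (27*t^2)^θ := by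
        have h1' : Y^θ ≤ (27*t^2)^θ :=
          Real.rpow_le_rpow (le_of_lt hYpos) hY27 (le_of_lt hθpos)
        have := hκ.le; gcongr
  -- take logs
  have hlog : (k:ℝ) * l3 < lκ + θ * (3*l3 + 2*((k:ℝ)*(l3 - l2))) := by
    have h1 := Real.log_lt_log (by positivity) h3k'
    rw [Real.log_pow, Real.log_mul (ne_of_gt hκ) (ne_of_gt (Real.rpow_pos_of_pos (by positivity) θ)),
      Real.log_rpow (by positivity),
      Real.log_mul (by norm_num) (by positivity),
      show (27:ℝ) = 3^3 by norm_num, Real.log_pow, Real.log_pow, htdef, Real.log_pow,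
      show (3:ℝ)/2 = 3/2 by norm_num, e32] at h1
    push_cast at h1 ⊢
    linarith
  -- conclude k + 1 < K, contradiction
  have hfin : ((k:ℝ)+1) * (l3 - 2*θ*Real.log (3/2)) < 2*θ*Real.log 6 + lκ := by
    rw [e32, e6]
    nlinarith [mul_pos (sub_pos.mpr hθ1) hl3]
  have hKk : ((k:ℝ)+1) < K := by
    rw [hKdef, lt_div_iff₀ hα]; exact hfin
  have hfl : ((k:ℕ):ℤ) + 1 ≤ ⌊K⌋ := Int.le_floor.mpr (by push_cast; linarith)
  have hfl' : ((k:ℝ)) + 1 ≤ (⌊K⌋:ℝ) := by exact_mod_cast hfl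
  linarith [hk]
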